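/- Let (a,b) be a perplex parameter and let f = (u,v) : ℝ² → ℝ² be ℙ_{a,b}-differentiable with derivative f', and assume f is differentiable in the usual real sense. Then for every x ∈ ℝ²: f'(x) = (0,1)⁻¹ * (u_{x₂}(x), v_{x₂}(x)) and f'(x) = (1,0)⁻¹ * (u_{x₁}(x), v_{x₁}(x)), where (0,1)⁻¹ and (1,0)⁻¹ are the *-inverses of the standard basis vectors; consequently the generalized Cauchy–Riemann equation (0,1) * (u_{x₁}(x), v_{x₁}(x)) = (1,0) * (u_{x₂}(x), v_{x₂}(x)) holds at every x. -/

import Mathlib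

open Filter Topology

noncomputable section

/-- The perplex product on `ℝ²` determined by the parameters `a = (a₁,a₂,a₃)`,
`b = (b₁,b₂,b₃)`. -/
def pmul (a₁ a₂ a₃ b₁ b₂ b₃ : ℝ) (x y : ℝ × ℝ) : ℝ × ℝ :=
  (a₁ * x.1 * y.1 + a₂ * (x.1 * y.2 + x.2 * y.1) + a₃ * x.2 * y.2,
   b₁ * x.1 * y.1 + b₂ * (x.1 * y.2 + x.2 * y.1) + b₃ * x.2 * y.2)

/-- `(a,b)` is a perplex parameter: conditions (i)-(iv). -/
def IsPerplexParam (a₁ a₂ a₃ b₁ b₂ b₃ : ℝ) : Prop :=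
  a₁ * a₃ - a₂ ^ 2 ≠ 0 ∧ a₁ * b₂ - a₂ * b₁ ≠ 0 ∧
    a₂ * b₂ - a₃ * b₁ = 0 ∧ a₁ * a₃ - a₂ ^ 2 + a₂ * b₃ - a₃ * b₂ = 0

/-- The multiplicative identity `𝟙` of the perplex algebra. -/
def pone (a₁ a₂ b₁ b₂ : ℝ) : ℝ × ℝ :=
  (1 / (a₁ * b₂ - a₂ * b₁)) • ((b₂, -b₁) : ℝ × ℝ)

/-- The perplex norm `N`. -/
def pN (a₁ a₂ a₃ b₁ b₂ b₃ : ℝ) (x : ℝ × ℝ) : ℝ :=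
  (a₁ * b₂ - a₂ * b₁) * x.1 ^ 2 + (a₁ * b₃ - a₃ * b₁) * x.1 * x.2 -
    (a₁ * a₃ - a₂ ^ 2) * x.2 ^ 2

/-- The Euclidean norm on `ℝ²`. -/
noncomputable def enorm2 (x : ℝ × ℝ) : ℝ := Real.sqrt (x.1 ^ 2 + x.2 ^ 2)

open Classical in
/-- The `*`-inverse of `x` (junk value `0` if `x` is not invertible). -/
noncomputable def pinv (a₁ a₂ a₃ b₁ b₂ b₃ : ℝ) (x : ℝ × ℝ) : ℝ × ℝ :=
  if h : ∃ y, pmul a₁ a₂ a₃ b₁ b₂ b₃ x y = pone a₁ a₂ b₁ b₂ then h.choose else 0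

/-- A sequence of invertible elements converging to `0` that is positively
separated from the zero-divisor directions. -/
def PosSep (a₁ a₂ a₃ b₁ b₂ b₃ : ℝ) (h : ℕ → ℝ × ℝ) : Prop :=
  (∀ n, ∃ y, pmul a₁ a₂ a₃ b₁ b₂ b₃ (h n) y = pone a₁ a₂ b₁ b₂) ∧
    Tendsto h atTop (nhds 0) ∧
      ∃ c > 0, ∀ n, c ≤ |pN a₁ a₂ a₃ b₁ b₂ b₃ ((enorm2 (h n))⁻¹ • h n)|

/-- `f` is `ℙ_{a,b}`-differentiable with (continuous) derivative `f'`. -/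
def PDiff (a₁ a₂ a₃ b₁ b₂ b₃ : ℝ) (f f' : ℝ × ℝ → ℝ × ℝ) : Prop :=
  Continuous f' ∧
    ∀ x, ∀ h : ℕ → ℝ × ℝ, PosSep a₁ a₂ a₃ b₁ b₂ b₃ h →
      Tendsto
        (fun n => pmul a₁ a₂ a₃ b₁ b₂ b₃ (f (x + h n) - f x)
          (pinv a₁ a₂ a₃ b₁ b₂ b₃ (h n)))
        atTop (nhds (f' x))

section Aux

variable {a₁ a₂ a₃ b₁ b₂ b₃ : ℝ}

/-- Key identity: under the perplex conditions, `b₂² - b₁b₃ = a₁b₂ - a₂b₁`. -/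
lemma key_id (hi : a₁ * a₃ - a₂ ^ 2 ≠ 0)
    (h3 : a₂ * b₂ - a₃ * b₁ = 0)
    (h4 : a₁ * a₃ - a₂ ^ 2 + a₂ * b₃ - a₃ * b₂ = 0) :
    b₂ ^ 2 - b₁ * b₃ - (a₁ * b₂ - a₂ * b₁) = 0 := by
  have h2 : a₂ * (b₂ ^ 2 - b₁ * b₃ - (a₁ * b₂ - a₂ * b₁)) = 0 := by
    linear_combination (b₂ - a₁) * h3 - b₁ * h4
  have h3' : a₃ * (b₂ ^ 2 - b₁ * b₃ - (a₁ * b₂ - a₂ * b₁)) = 0 := by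
    linear_combination (b₃ - a₂) * h3 - b₂ * h4
  by_contra hX
  apply hi
  have ha2 : a₂ = 0 := by
    rcases mul_eq_zero.1 h2 with h | h
    · exact h
    · exact absurd h hX
  have ha3 : a₃ = 0 := by
    rcases mul_eq_zero.1 h3' with h | h
    · exact h
    · exact absurd h hX
  rw [ha2, ha3]; ring

lemma pmul_comm' (x y : ℝ × ℝ) :
    pmul a₁ a₂ a₃ b₁ b₂ b₃ x y = pmul a₁ a₂ a₃ b₁ b₂ b₃ y x := by
  simp only [pmul, Prod.mk.injEq]; constructor <;> ring

lemma pmul_smul_smul (s t : ℝ) (x y : ℝ × ℝ) :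
    pmul a₁ a₂ a₃ b₁ b₂ b₃ (s • x) (t • y) =
      (s * t) • pmul a₁ a₂ a₃ b₁ b₂ b₃ x y := by
  simp only [pmul, Prod.smul_mk, smul_eq_mul, Prod.smul_fst, Prod.smul_snd,
    Prod.mk.injEq]
  constructor <;> ring

lemma pmul_smul_right (t : ℝ) (x y : ℝ × ℝ) :
    pmul a₁ a₂ a₃ b₁ b₂ b₃ x (t • y) = t • pmul a₁ a₂ a₃ b₁ b₂ b₃ x y := by
  simp only [pmul, Prod.smul_mk, smul_eq_mul, Prod.smul_fst, Prod.smul_snd,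
    Prod.mk.injEq]
  constructor <;> ring

lemma pmul_pone (hi : a₁ * a₃ - a₂ ^ 2 ≠ 0) (hD : a₁ * b₂ - a₂ * b₁ ≠ 0)
    (h3 : a₂ * b₂ - a₃ * b₁ = 0)
    (h4 : a₁ * a₃ - a₂ ^ 2 + a₂ * b₃ - a₃ * b₂ = 0) (x : ℝ × ℝ) :
    pmul a₁ a₂ a₃ b₁ b₂ b₃ x (pone a₁ a₂ b₁ b₂) = x := by
  have hX := key_id hi h3 h4
  have hDone : (a₁ * b₂ - a₂ * b₁) • pone a₁ a₂ b₁ b₂ = ((b₂, -b₁) : ℝ × ℝ) := by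
    rw [pone, smul_smul, mul_one_div, div_self hD, one_smul]
  refine smul_right_injective (ℝ × ℝ) hD ?_
  show (a₁ * b₂ - a₂ * b₁) • pmul a₁ a₂ a₃ b₁ b₂ b₃ x (pone a₁ a₂ b₁ b₂) =
    (a₁ * b₂ - a₂ * b₁) • x
  rw [← pmul_smul_right, hDone]
  obtain ⟨x1, x2⟩ := x
  simp only [pmul, Prod.smul_mk, smul_eq_mul, Prod.mk.injEq]
  constructor
  · linear_combination x2 * h3
  · linear_combination x2 * hX

lemma passoc (hi : a₁ * a₃ - a₂ ^ 2 ≠ 0)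
    (h3 : a₂ * b₂ - a₃ * b₁ = 0)
    (h4 : a₁ * a₃ - a₂ ^ 2 + a₂ * b₃ - a₃ * b₂ = 0) (x y z : ℝ × ℝ) :
    pmul a₁ a₂ a₃ b₁ b₂ b₃ x (pmul a₁ a₂ a₃ b₁ b₂ b₃ y z) =
      pmul a₁ a₂ a₃ b₁ b₂ b₃ (pmul a₁ a₂ a₃ b₁ b₂ b₃ x y) z := by
  have hX := key_id hi h3 h4
  simp only [pmul, Prod.mk.injEq]
  constructor
  · linear_combination (x.1 * y.1 * z.2 - x.2 * y.1 * z.1) * h3 +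
      (x.1 * y.2 * z.2 - x.2 * y.2 * z.1) * h4
  · linear_combination (x.1 * y.1 * z.2 - x.2 * y.1 * z.1) * hX +
      (x.2 * y.2 * z.1 - x.1 * y.2 * z.2) * h3

end Aux
section Aux2

variable {a₁ a₂ a₃ b₁ b₂ b₃ : ℝ}

lemma pinv_unique (hi : a₁ * a₃ - a₂ ^ 2 ≠ 0) (hD : a₁ * b₂ - a₂ * b₁ ≠ 0)
    (h3 : a₂ * b₂ - a₃ * b₁ = 0)
    (h4 : a₁ * a₃ - a₂ ^ 2 + a₂ * b₃ - a₃ * b₂ = 0) {x y y' : ℝ × ℝ}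
    (hy : pmul a₁ a₂ a₃ b₁ b₂ b₃ x y = pone a₁ a₂ b₁ b₂)
    (hy' : pmul a₁ a₂ a₃ b₁ b₂ b₃ x y' = pone a₁ a₂ b₁ b₂) : y = y' := by
  have : pmul a₁ a₂ a₃ b₁ b₂ b₃ y (pmul a₁ a₂ a₃ b₁ b₂ b₃ x y') =
      pmul a₁ a₂ a₃ b₁ b₂ b₃ (pmul a₁ a₂ a₃ b₁ b₂ b₃ x y) y' := by
    rw [passoc hi h3 h4, pmul_comm' y x]
  rw [hy, hy', pmul_pone hi hD h3 h4, pmul_comm', pmul_pone hi hD h3 h4] at this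
  exact this

lemma pinv_mul {x : ℝ × ℝ}
    (h : ∃ y, pmul a₁ a₂ a₃ b₁ b₂ b₃ x y = pone a₁ a₂ b₁ b₂) :
    pmul a₁ a₂ a₃ b₁ b₂ b₃ x (pinv a₁ a₂ a₃ b₁ b₂ b₃ x) = pone a₁ a₂ b₁ b₂ := by
  rw [pinv, dif_pos h]
  exact h.choose_spec

lemma pinv_eq (hi : a₁ * a₃ - a₂ ^ 2 ≠ 0) (hD : a₁ * b₂ - a₂ * b₁ ≠ 0)
    (h3 : a₂ * b₂ - a₃ * b₁ = 0)
    (h4 : a₁ * a₃ - a₂ ^ 2 + a₂ * b₃ - a₃ * b₂ = 0) {x y : ℝ × ℝ}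
    (hy : pmul a₁ a₂ a₃ b₁ b₂ b₃ x y = pone a₁ a₂ b₁ b₂) :
    pinv a₁ a₂ a₃ b₁ b₂ b₃ x = y :=
  pinv_unique hi hD h3 h4 (pinv_mul ⟨y, hy⟩) hy

lemma inv_e1 (hD : a₁ * b₂ - a₂ * b₁ ≠ 0) :
    pmul a₁ a₂ a₃ b₁ b₂ b₃ ((1, 0) : ℝ × ℝ)
      ((1 / ((a₁ * b₂ - a₂ * b₁) * (a₁ * b₂ - a₂ * b₁))) •
        ((b₂ ^ 2 + a₂ * b₁, -(b₁ * b₂ + a₁ * b₁)) : ℝ × ℝ)) =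
      pone a₁ a₂ b₁ b₂ := by
  simp only [pmul, pone, Prod.smul_mk, smul_eq_mul, Prod.mk.injEq]
  constructor
  · field_simp; ring
  · rw [← one_div_mul_one_div]
    linear_combination (-b₁ * (1 / (a₁ * b₂ - a₂ * b₁))) * mul_one_div_cancel hD

lemma inv_e2 (hi : a₁ * a₃ - a₂ ^ 2 ≠ 0) (hD : a₁ * b₂ - a₂ * b₁ ≠ 0)
    (h4 : a₁ * a₃ - a₂ ^ 2 + a₂ * b₃ - a₃ * b₂ = 0) :
    pmul a₁ a₂ a₃ b₁ b₂ b₃ ((0, 1) : ℝ × ℝ)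
      ((1 / ((a₂ * b₃ - a₃ * b₂) * (a₁ * b₂ - a₂ * b₁))) •
        ((b₂ * b₃ + a₃ * b₁, -(b₂ ^ 2 + a₂ * b₁)) : ℝ × ℝ)) =
      pone a₁ a₂ b₁ b₂ := by
  have hE : a₂ * b₃ - a₃ * b₂ ≠ 0 := by
    intro h
    apply hi
    linear_combination h4 - h
  simp only [pmul, pone, Prod.smul_mk, smul_eq_mul, Prod.mk.injEq]
  constructor
  · field_simp; ring
  · field_simp; ring

lemma pN_e1 : pN a₁ a₂ a₃ b₁ b₂ b₃ ((1, 0) : ℝ × ℝ) = a₁ * b₂ - a₂ * b₁ := by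
  simp [pN]

lemma pN_e2 : pN a₁ a₂ a₃ b₁ b₂ b₃ ((0, 1) : ℝ × ℝ) = -(a₁ * a₃ - a₂ ^ 2) := by
  simp [pN]

lemma enorm2_smul_unit {e : ℝ × ℝ} (he : e.1 ^ 2 + e.2 ^ 2 = 1) {t : ℝ}
    (ht : 0 < t) : enorm2 (t • e) = t := by
  rw [enorm2]
  have : (t • e).1 ^ 2 + (t • e).2 ^ 2 = t ^ 2 := by
    simp only [Prod.smul_fst, Prod.smul_snd, smul_eq_mul]
    linear_combination t ^ 2 * he
  rw [this, Real.sqrt_sq ht.le]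

end Aux2
section Aux3

variable {a₁ a₂ a₃ b₁ b₂ b₃ : ℝ}

lemma pN_smul (t : ℝ) (x : ℝ × ℝ) :
    pN a₁ a₂ a₃ b₁ b₂ b₃ (t • x) = t ^ 2 * pN a₁ a₂ a₃ b₁ b₂ b₃ x := by
  simp only [pN, Prod.smul_fst, Prod.smul_snd, smul_eq_mul]
  ring

lemma pmul_continuous (u : ℝ × ℝ) :
    Continuous (fun z => pmul a₁ a₂ a₃ b₁ b₂ b₃ u z) := by
  unfold pmul
  fun_prop

lemma deriv_dir (hp : IsPerplexParam a₁ a₂ a₃ b₁ b₂ b₃)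
    (f f' : ℝ × ℝ → ℝ × ℝ)
    (hdiff : PDiff a₁ a₂ a₃ b₁ b₂ b₃ f f')
    (hreal : Differentiable ℝ f)
    (e w : ℝ × ℝ) (hw : pmul a₁ a₂ a₃ b₁ b₂ b₃ e w = pone a₁ a₂ b₁ b₂)
    (hunit : e.1 ^ 2 + e.2 ^ 2 = 1)
    (hNe : pN a₁ a₂ a₃ b₁ b₂ b₃ e ≠ 0) (x : ℝ × ℝ) :
    f' x = pmul a₁ a₂ a₃ b₁ b₂ b₃ (pinv a₁ a₂ a₃ b₁ b₂ b₃ e)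
      (fderiv ℝ f x e) := by
  obtain ⟨hi, hD, h3, h4⟩ := hp
  set c : ℕ → ℝ := fun n => (n : ℝ) + 1 with hc_def
  have hcpos : ∀ n, 0 < c n := fun n => by positivity
  have hcne : ∀ n, c n ≠ 0 := fun n => (hcpos n).ne'
  set h : ℕ → ℝ × ℝ := fun n => (c n)⁻¹ • e with hh_def
  have hpe : pmul a₁ a₂ a₃ b₁ b₂ b₃ e (pinv a₁ a₂ a₃ b₁ b₂ b₃ e) =
      pone a₁ a₂ b₁ b₂ := pinv_mul ⟨w, hw⟩
  have hinvn : ∀ n, pmul a₁ a₂ a₃ b₁ b₂ b₃ (h n) (c n • pinv a₁ a₂ a₃ b₁ b₂ b₃ e)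
      = pone a₁ a₂ b₁ b₂ := by
    intro n
    rw [hh_def, pmul_smul_smul, inv_mul_cancel₀ (hcne n), hpe, one_smul]
  have hpinvn : ∀ n, pinv a₁ a₂ a₃ b₁ b₂ b₃ (h n) =
      c n • pinv a₁ a₂ a₃ b₁ b₂ b₃ e := fun n =>
    pinv_eq hi hD h3 h4 (hinvn n)
  -- positively separated
  have hcatTop : Tendsto c atTop atTop :=
    tendsto_atTop_add_const_right _ 1 tendsto_natCast_atTop_atTop
  have hPos : PosSep a₁ a₂ a₃ b₁ b₂ b₃ h := by
    refine ⟨fun n => ⟨_, hinvn n⟩, ?_, ?_⟩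
    · have : Tendsto (fun n => (c n)⁻¹) atTop (nhds 0) :=
        tendsto_inv_atTop_zero.comp hcatTop
      simpa using this.smul_const e
    · refine ⟨|pN a₁ a₂ a₃ b₁ b₂ b₃ e|, abs_pos.2 hNe, fun n => ?_⟩
      have hnorm : enorm2 (h n) = (c n)⁻¹ :=
        enorm2_smul_unit hunit (by positivity)
      rw [hnorm, hh_def]
      simp only [smul_smul]
      rw [inv_inv, mul_inv_cancel₀ (hcne n), one_smul]
  -- the real directional limit
  have hlim := (hreal x).hasFDerivAt.lim e (c := c) (l := atTop)
    (by simpa [Real.norm_eq_abs, abs_of_pos (hcpos _)] using hcatTop)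
  have hlim2 : Tendsto
      (fun n => pmul a₁ a₂ a₃ b₁ b₂ b₃ (pinv a₁ a₂ a₃ b₁ b₂ b₃ e)
        (c n • (f (x + (c n)⁻¹ • e) - f x))) atTop
      (nhds (pmul a₁ a₂ a₃ b₁ b₂ b₃ (pinv a₁ a₂ a₃ b₁ b₂ b₃ e)
        (fderiv ℝ f x e))) :=
    ((pmul_continuous _).tendsto _).comp hlim
  have heqseq : ∀ n,
      pmul a₁ a₂ a₃ b₁ b₂ b₃ (f (x + h n) - f x)
        (pinv a₁ a₂ a₃ b₁ b₂ b₃ (h n)) =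
      pmul a₁ a₂ a₃ b₁ b₂ b₃ (pinv a₁ a₂ a₃ b₁ b₂ b₃ e)
        (c n • (f (x + (c n)⁻¹ • e) - f x)) := by
    intro n
    rw [hpinvn n, pmul_smul_right, pmul_comm', ← pmul_smul_right]
  have hmain := hdiff.2 x h hPos
  rw [funext heqseq] at hmain
  exact tendsto_nhds_unique hmain hlim2

end Aux3
/-- Proposition 2.4 and Corollary 2.6: the derivative of a `ℙ_{a,b}`-differentiable
function is expressed through the real partial derivatives, and the generalized
Cauchy–Riemann equation holds. -/
theorem pderiv_formulas_and_GCR (a₁ a₂ a₃ b₁ b₂ b₃ : ℝ)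
    (hp : IsPerplexParam a₁ a₂ a₃ b₁ b₂ b₃)
    (f f' : ℝ × ℝ → ℝ × ℝ)
    (hdiff : PDiff a₁ a₂ a₃ b₁ b₂ b₃ f f')
    (hreal : Differentiable ℝ f) :
    ∀ x : ℝ × ℝ,
      f' x = pmul a₁ a₂ a₃ b₁ b₂ b₃ (pinv a₁ a₂ a₃ b₁ b₂ b₃ ((0, 1) : ℝ × ℝ)) (fderiv ℝ f x ((0, 1) : ℝ × ℝ)) ∧
      f' x = pmul a₁ a₂ a₃ b₁ b₂ b₃ (pinv a₁ a₂ a₃ b₁ b₂ b₃ ((1, 0) : ℝ × ℝ)) (fderiv ℝ f x ((1, 0) : ℝ × ℝ)) ∧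
      pmul a₁ a₂ a₃ b₁ b₂ b₃ ((0, 1) : ℝ × ℝ) (fderiv ℝ f x ((1, 0) : ℝ × ℝ)) =
        pmul a₁ a₂ a₃ b₁ b₂ b₃ ((1, 0) : ℝ × ℝ) (fderiv ℝ f x ((0, 1) : ℝ × ℝ)) := by
  intro x
  obtain ⟨hi, hD, h3, h4⟩ := hp
  have hF2 := deriv_dir ⟨hi, hD, h3, h4⟩ f f' hdiff hreal ((0, 1) : ℝ × ℝ) _
    (inv_e2 hi hD h4) (by norm_num) (by rw [pN_e2]; exact neg_ne_zero.2 hi) x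
  have hF1 := deriv_dir ⟨hi, hD, h3, h4⟩ f f' hdiff hreal ((1, 0) : ℝ × ℝ) _
    (inv_e1 hD) (by norm_num) (by rw [pN_e1]; exact hD) x
  refine ⟨hF2, hF1, ?_⟩
  set D₁ := fderiv ℝ f x ((1, 0) : ℝ × ℝ)
  set D₂ := fderiv ℝ f x ((0, 1) : ℝ × ℝ)
  set p := pinv a₁ a₂ a₃ b₁ b₂ b₃ ((1, 0) : ℝ × ℝ)
  set q := pinv a₁ a₂ a₃ b₁ b₂ b₃ ((0, 1) : ℝ × ℝ)
  have hp1 : pmul a₁ a₂ a₃ b₁ b₂ b₃ ((1, 0) : ℝ × ℝ) p = pone a₁ a₂ b₁ b₂ :=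
    pinv_mul ⟨_, inv_e1 hD⟩
  have hq1 : pmul a₁ a₂ a₃ b₁ b₂ b₃ ((0, 1) : ℝ × ℝ) q = pone a₁ a₂ b₁ b₂ :=
    pinv_mul ⟨_, inv_e2 hi hD h4⟩
  have heq : pmul a₁ a₂ a₃ b₁ b₂ b₃ p D₁ = pmul a₁ a₂ a₃ b₁ b₂ b₃ q D₂ :=
    hF1.symm.trans hF2
  have hone : ∀ z : ℝ × ℝ, pmul a₁ a₂ a₃ b₁ b₂ b₃ (pone a₁ a₂ b₁ b₂) z = z :=
    fun z => (pmul_comm' _ _).trans (pmul_pone hi hD h3 h4 z)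
  calc pmul a₁ a₂ a₃ b₁ b₂ b₃ ((0, 1) : ℝ × ℝ) D₁
      = pmul a₁ a₂ a₃ b₁ b₂ b₃ ((0, 1) : ℝ × ℝ)
          (pmul a₁ a₂ a₃ b₁ b₂ b₃ (pmul a₁ a₂ a₃ b₁ b₂ b₃ ((1, 0) : ℝ × ℝ) p) D₁) := by
        rw [hp1, hone]
    _ = pmul a₁ a₂ a₃ b₁ b₂ b₃
          (pmul a₁ a₂ a₃ b₁ b₂ b₃ ((0, 1) : ℝ × ℝ) ((1, 0) : ℝ × ℝ))
          (pmul a₁ a₂ a₃ b₁ b₂ b₃ p D₁) := by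
        rw [← passoc hi h3 h4, ← passoc hi h3 h4]
    _ = pmul a₁ a₂ a₃ b₁ b₂ b₃
          (pmul a₁ a₂ a₃ b₁ b₂ b₃ ((1, 0) : ℝ × ℝ) ((0, 1) : ℝ × ℝ))
          (pmul a₁ a₂ a₃ b₁ b₂ b₃ q D₂) := by
        rw [heq, pmul_comm' ((0, 1) : ℝ × ℝ) ((1, 0) : ℝ × ℝ)]
    _ = pmul a₁ a₂ a₃ b₁ b₂ b₃ ((1, 0) : ℝ × ℝ)
          (pmul a₁ a₂ a₃ b₁ b₂ b₃ (pmul a₁ a₂ a₃ b₁ b₂ b₃ ((0, 1) : ℝ × ℝ) q) D₂) := by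
        rw [← passoc hi h3 h4, ← passoc hi h3 h4]
    _ = pmul a₁ a₂ a₃ b₁ b₂ b₃ ((1, 0) : ℝ × ℝ) D₂ := by
        rw [hq1, hone]
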